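/- arXiv:1907.02344 — 5 statements merged into one kernel-verified Lean document; each statement's English description precedes it below -/
import Mathlib

section
/- Define h(s) = (1+θ/n)s - Q(s) and H(s) = h(s)/((1+θ/n)s) for s ∈ (0,1], where Q(s) = 1 - f(1-s) and f is the probability generating function of an offspring distribution with mean 1+θ/n and probability p₀ > 0 of zero offspring. Then 0 ≤ H(s) ≤ (θ/n + p₀)/(1 + θ/n) ≤ 1 for all s ∈ (0,1], provided θ ≥ 0 and θ/n + p₀ ≤ 1. -/
open Real Set

lemma one_sub_pow_le' {x : ℝ} (hx0 : 0 ≤ x) (hx1 : x ≤ 1) (i : ℕ) :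
    1 - x ^ i ≤ (i : ℝ) * (1 - x) := by
  induction i with
  | zero => simp
  | succ k ih =>
    have hxk : x ^ k ≤ 1 := pow_le_one₀ hx0 hx1
    have : x * x ^ k ≥ x ^ k - (1 - x) := by nlinarith [pow_nonneg hx0 k]
    push_cast
    calc 1 - x ^ (k+1) = (1 - x ^ k) + (x ^ k - x * x ^ k) := by rw [pow_succ]; ring
    _ ≤ (k : ℝ) * (1 - x) + (1 - x) := by nlinarith
    _ = ((k : ℝ) + 1) * (1 - x) := by ring

set_option maxHeartbeats 1600000 in
/-- With `Q(s) = 1 - f(1-s)`, `h(s) = (1+θ/n)s - Q(s)` and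
`H(s) = h(s)/((1+θ/n)s)`, one has `0 ≤ H(s) ≤ (θ/n + p₀)/(1+θ/n) ≤ 1`
for all `s ∈ (0,1]`, provided `θ ≥ 0` and `θ/n + p₀ ≤ 1`. -/
theorem stmt_2 (θ : ℝ) (n : ℕ) (hn : 0 < n) (hθ : 0 ≤ θ) (p : ℕ → ℝ)
    (hp0 : 0 < p 0) (hnonneg : ∀ i, 0 ≤ p i)
    (hsum : ∑' i : ℕ, p i = 1)
    (hmean : ∑' i : ℕ, (i : ℝ) * p i = 1 + θ / n)
    (hsmall : θ / n + p 0 ≤ 1) :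
    let f : ℝ → ℝ := fun s => ∑' i : ℕ, p i * s ^ i
    let Q : ℝ → ℝ := fun s => 1 - f (1 - s)
    let h : ℝ → ℝ := fun s => (1 + θ / n) * s - Q s
    let H : ℝ → ℝ := fun s => h s / ((1 + θ / n) * s)
    ∀ s ∈ Ioc (0:ℝ) 1,
      0 ≤ H s ∧ H s ≤ (θ / n + p 0) / (1 + θ / n) ∧
        (θ / n + p 0) / (1 + θ / n) ≤ 1 := by
  intro f Q h H s hs
  obtain ⟨hs0, hs1⟩ := hs
  have hc : 0 ≤ θ / n := div_nonneg hθ (Nat.cast_nonneg n)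
  have hps : Summable p := by
    by_contra hc'
    rw [tsum_eq_zero_of_not_summable hc'] at hsum; norm_num at hsum
  have hips : Summable (fun i : ℕ => (i : ℝ) * p i) := by
    by_contra hc'
    rw [tsum_eq_zero_of_not_summable hc'] at hmean; linarith
  set x : ℝ := 1 - s with hxdef
  have hx0 : 0 ≤ x := by simp [hxdef]; linarith
  have hx1 : x ≤ 1 := by simp [hxdef]; linarith
  have hterm : ∀ i, 0 ≤ p i * x ^ i := fun i => mul_nonneg (hnonneg i) (pow_nonneg hx0 i)
  have hfs : Summable (fun i => p i * x ^ i) :=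
    Summable.of_nonneg_of_le hterm
      (fun i => by
        calc p i * x ^ i ≤ p i * 1 := by
              exact mul_le_mul_of_nonneg_left (pow_le_one₀ hx0 hx1) (hnonneg i)
          _ = p i := mul_one _) hps
  -- f(1-s) = ∑ p i x^i
  have hfval : f (1 - s) = ∑' i, p i * x ^ i := rfl
  -- key identity: 1 - f(1-s) = ∑ p i (1 - x^i)
  have hdiff : Summable (fun i => p i * (1 - x ^ i)) := by
    have := hps.sub hfs
    simpa [mul_sub] using this
  have hQ : Q s = ∑' i, p i * (1 - x ^ i) := by
    have : (∑' i, p i * (1 - x ^ i)) = (∑' i, p i) - ∑' i, p i * x ^ i := by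
      rw [← Summable.tsum_sub hps hfs]
      congr 1; funext i; ring
    simp only [Q, hfval, this, hsum]
  -- upper bound on Q: Q s ≤ (1+θ/n) * s
  have hQub : Q s ≤ (1 + θ / n) * s := by
    rw [hQ]
    have : (1 + θ / n) * s = ∑' i : ℕ, (1 - x) * ((i : ℝ) * p i) := by
      rw [tsum_mul_left, hmean, hxdef]; ring
    rw [this]
    refine Summable.tsum_le_tsum (fun i => ?_) hdiff (hips.mul_left _)
    have h1 := one_sub_pow_le' hx0 hx1 i
    have := hnonneg i
    nlinarith
  -- lower bound on Q: Q s ≥ (1 - p 0) * s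
  have hQlb : (1 - p 0) * s ≤ Q s := by
    rw [hQ]
    rw [Summable.tsum_eq_zero_add hdiff]
    have h0 : p 0 * (1 - x ^ 0) = 0 := by simp
    rw [h0, zero_add]
    have hsum' : (∑' i : ℕ, p (i + 1)) = 1 - p 0 := by
      have := Summable.tsum_eq_zero_add hps
      rw [hsum] at this; linarith
    have hsub : Summable (fun i : ℕ => p (i + 1)) := by
      exact (summable_nat_add_iff 1).mpr hps
    have : (1 - p 0) * s = ∑' i : ℕ, p (i + 1) * s := by
      rw [tsum_mul_right, hsum']
    rw [this]
    refine Summable.tsum_le_tsum (fun i => ?_) (hsub.mul_right _) ((summable_nat_add_iff 1).mpr hdiff)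
    have hxs : x ^ (i + 1) ≤ x := by
      calc x ^ (i + 1) ≤ x ^ 1 := pow_le_pow_of_le_one hx0 hx1 (by omega)
        _ = x := pow_one x
    have := hnonneg (i + 1)
    nlinarith [hxdef]
  have hD : 0 < (1 + θ / n) * s := by positivity
  have hlast : (θ / n + p 0) / (1 + θ / n) ≤ 1 := by
    rw [div_le_one (by linarith)]; linarith
  clear_value x
  obtain ⟨q, hq⟩ : ∃ q, Q s = q := ⟨Q s, rfl⟩
  rw [hq] at hQub hQlb
  clear hQ hfval hdiff hfs hterm hips hps hsum hmean hp0 hnonneg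
  refine ⟨?_, ?_, hlast⟩
  · show 0 ≤ ((1 + θ / n) * s - Q s) / ((1 + θ / n) * s)
    rw [hq]
    apply div_nonneg _ hD.le
    linarith
  · show ((1 + θ / n) * s - Q s) / ((1 + θ / n) * s) ≤ (θ / n + p 0) / (1 + θ / n)
    rw [hq, div_le_div_iff₀ hD (by linarith)]
    clear hq H h Q f
    have key : (1 + θ / n) * s - q ≤ (θ / n + p 0) * s := by
      have e : (1 + θ / n) * s - q - (θ / n + p 0) * s = (1 - p 0) * s - q := by ring
      linarith [e]
    have h2 := mul_le_mul_of_nonneg_right key (show (0:ℝ) ≤ 1 + θ / n by linarith)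
    have e2 : ((θ / n + p 0) * s) * (1 + θ / n) = (θ / n + p 0) * ((1 + θ / n) * s) := by ring
    linarith [h2, e2]
end

section
/- Let f_n be the probability generating function of an offspring distribution with mean 1+θ/n (θ > 0) and variance σₙ² satisfying σₙ² → σ² > 0 with uniformly bounded third moments, and let qₙ be the smallest nonnegative fixed point of f_n. Then qₙ = 1 - 2θ/(nσ²) + o(1/n) as n → ∞. -/
set_option linter.unusedSectionVars false
open Real Filter
set_option maxHeartbeats 1000000

lemma stmt6_pow_sub_le (a b : ℝ) (hb : 0 ≤ b) (hba : b ≤ a) (ha : a ≤ 1) (i : ℕ) :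
    a ^ i - b ^ i ≤ i * (a - b) := by
  induction i with
  | zero => simp
  | succ i ih =>
    have h1 : b ^ i ≤ 1 := pow_le_one₀ hb (hba.trans ha)
    have h2 : 0 ≤ a ^ i - b ^ i := by
      have := pow_le_pow_left₀ hb hba i
      linarith
    have key : a ^ (i+1) - b ^ (i+1) = a * (a ^ i - b ^ i) + (a - b) * b ^ i := by ring
    rw [key]
    push_cast
    nlinarith [mul_nonneg (sub_nonneg.2 hba) (pow_nonneg hb i)]

lemma stmt6_one_sub_pow_le (t : ℝ) (h0 : 0 ≤ t) (h1 : t ≤ 1) (i : ℕ) :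
    (1 - t) ^ i ≤ 1 - i * t + (i.choose 2) * t ^ 2 := by
  induction i with
  | zero => simp
  | succ i ih =>
    have hc : (0:ℝ) ≤ (i.choose 2 : ℝ) := by positivity
    have h1t : 0 ≤ 1 - t := by linarith
    have hps : (1 - t) ^ (i+1) = (1 - t) * (1 - t) ^ i := by ring
    have step : (1 - t) ^ (i+1) ≤ (1 - t) * (1 - i * t + (i.choose 2) * t ^ 2) := by
      rw [hps]; exact mul_le_mul_of_nonneg_left ih h1t
    refine step.trans ?_
    have hcast : ((i+1).choose 2 : ℝ) = (i.choose 2 : ℝ) + i := by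
      rw [Nat.choose_succ_succ]
      push_cast [Nat.choose_one_right]
      ring
    rw [hcast]
    push_cast
    nlinarith [mul_nonneg (mul_nonneg hc h0) (mul_nonneg h0 h0)]

lemma stmt6_le_one_sub_pow (t : ℝ) (h0 : 0 ≤ t) (h1 : t ≤ 1) (i : ℕ) :
    1 - i * t + (i.choose 2) * t ^ 2 - (i.choose 3) * t ^ 3 ≤ (1 - t) ^ i := by
  induction i with
  | zero => simp
  | succ i ih =>
    have hc2 : (0:ℝ) ≤ (i.choose 2 : ℝ) := by positivity
    have hc3 : (0:ℝ) ≤ (i.choose 3 : ℝ) := by positivity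
    have h1t : 0 ≤ 1 - t := by linarith
    have step : (1 - t) * (1 - i * t + (i.choose 2) * t ^ 2 - (i.choose 3) * t ^ 3)
        ≤ (1 - t) ^ (i+1) := by
      have hps : (1 - t) ^ (i+1) = (1 - t) * (1 - t) ^ i := by ring
      rw [hps]; exact mul_le_mul_of_nonneg_left ih h1t
    refine le_trans ?_ step
    have hcast2 : ((i+1).choose 2 : ℝ) = (i.choose 2 : ℝ) + i := by
      rw [Nat.choose_succ_succ]
      push_cast [Nat.choose_one_right]
      ring
    have hcast3 : ((i+1).choose 3 : ℝ) = (i.choose 3 : ℝ) + (i.choose 2 : ℝ) := by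
      rw [Nat.choose_succ_succ]
      push_cast
      ring
    rw [hcast2, hcast3]
    push_cast
    nlinarith [mul_nonneg (mul_nonneg (mul_nonneg hc3 h0) (mul_nonneg h0 h0)) h0]


noncomputable def stmt6A (p : ℕ → ℝ) : ℝ := ∑' i : ℕ, (i.choose 2 : ℝ) * p i
noncomputable def stmt6B (p : ℕ → ℝ) : ℝ := ∑' i : ℕ, (i.choose 3 : ℝ) * p i
noncomputable def stmt6R (p : ℕ → ℝ) (t : ℝ) : ℝ :=
  ∑' i : ℕ, p i * ((1 - t) ^ i - 1 + i * t)

section dist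
variable {p : ℕ → ℝ} (hnn : ∀ i, 0 ≤ p i) (hsum : ∑' i : ℕ, p i = 1)
  (h3 : Summable fun i : ℕ => (i : ℝ) ^ 3 * p i)
  (h1 : Summable fun i : ℕ => (i : ℝ) * p i)

include hnn hsum in
lemma stmt6_summable_p : Summable p := by
  by_contra h
  rw [tsum_eq_zero_of_not_summable h] at hsum
  norm_num at hsum

include hnn hsum h3 in
lemma stmt6_summable_sq : Summable fun i : ℕ => (i : ℝ) ^ 2 * p i := by
  refine Summable.of_nonneg_of_le (fun i => mul_nonneg (by positivity) (hnn i))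
    (fun i => ?_) ((stmt6_summable_p hnn hsum).add h3)
  have hi : (i : ℝ) ^ 2 ≤ 1 + (i : ℝ) ^ 3 := by
    rcases Nat.eq_zero_or_pos i with h | h
    · simp [h]
    · have h1 : (1:ℝ) ≤ (i:ℝ) := by exact_mod_cast h
      nlinarith
  have := mul_le_mul_of_nonneg_right hi (hnn i)
  simpa [add_mul] using this

include hnn hsum h3 in
lemma stmt6_summable_c2 : Summable fun i : ℕ => (i.choose 2 : ℝ) * p i := by
  refine Summable.of_nonneg_of_le (fun i => mul_nonneg (by positivity) (hnn i))
    (fun i => ?_) (stmt6_summable_sq hnn hsum h3)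
  refine mul_le_mul_of_nonneg_right ?_ (hnn i)
  exact_mod_cast Nat.cast_le.mpr (Nat.choose_le_pow i 2)

include hnn h3 in
lemma stmt6_summable_c3 : Summable fun i : ℕ => (i.choose 3 : ℝ) * p i := by
  refine Summable.of_nonneg_of_le (fun i => mul_nonneg (by positivity) (hnn i)) (fun i => ?_) h3
  refine mul_le_mul_of_nonneg_right ?_ (hnn i)
  exact_mod_cast Nat.cast_le.mpr (Nat.choose_le_pow i 3)

include hnn hsum in
lemma stmt6_summable_pow {x : ℝ} (hx : |x| ≤ 1) :
    Summable fun i : ℕ => p i * x ^ i := by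
  refine Summable.of_norm ?_
  refine Summable.of_nonneg_of_le (fun i => norm_nonneg _) (fun i => ?_)
    (stmt6_summable_p hnn hsum)
  rw [norm_mul, norm_pow]
  have : ‖x‖ ^ i ≤ 1 := pow_le_one₀ (norm_nonneg x) hx
  calc ‖p i‖ * ‖x‖ ^ i ≤ ‖p i‖ * 1 := by
        exact mul_le_mul_of_nonneg_left this (norm_nonneg _)
    _ = p i := by rw [mul_one, Real.norm_eq_abs, abs_of_nonneg (hnn i)]

include hnn hsum h3 h1 in
lemma stmt6_summable_R {t : ℝ} (h0 : 0 ≤ t) (ht : t ≤ 1) :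
    Summable fun i : ℕ => p i * ((1 - t) ^ i - 1 + i * t) := by
  have hx : |1 - t| ≤ 1 := by rw [abs_le]; constructor <;> linarith
  have hs := ((stmt6_summable_pow hnn hsum hx).sub (stmt6_summable_p hnn hsum)).add
    (h1.mul_right t)
  refine hs.congr fun i => by ring

include hnn hsum h1 h3 in
lemma stmt6_identity {t : ℝ} (h0 : 0 ≤ t) (ht : t ≤ 1) :
    ∑' i : ℕ, p i * (1 - t) ^ i
      = 1 - (∑' i : ℕ, (i : ℝ) * p i) * t + stmt6R p t := by
  have hx : |1 - t| ≤ 1 := by rw [abs_le]; constructor <;> linarith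
  have e : ∀ i : ℕ, p i * (1 - t) ^ i
      = p i - ((i : ℝ) * p i) * t + p i * ((1 - t) ^ i - 1 + i * t) := by
    intro i; ring
  rw [tsum_congr e]
  rw [Summable.tsum_add ((stmt6_summable_p hnn hsum).sub (h1.mul_right t))
    (stmt6_summable_R hnn hsum h3 h1 h0 ht),
    Summable.tsum_sub (stmt6_summable_p hnn hsum) (h1.mul_right t), tsum_mul_right, hsum]
  rfl

include hnn hsum h3 in
lemma stmt6_R_le {t : ℝ} (h0 : 0 ≤ t) (ht : t ≤ 1) (h1 : Summable fun i : ℕ => (i : ℝ) * p i) :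
    stmt6R p t ≤ stmt6A p * t ^ 2 := by
  rw [stmt6A, ← tsum_mul_right]
  refine Summable.tsum_le_tsum (fun i => ?_) (stmt6_summable_R hnn hsum h3 h1 h0 ht)
    ((stmt6_summable_c2 hnn hsum h3).mul_right _)
  have hb := stmt6_one_sub_pow_le t h0 ht i
  have : (1 - t) ^ i - 1 + i * t ≤ (i.choose 2 : ℝ) * t ^ 2 := by linarith
  calc p i * ((1 - t) ^ i - 1 + i * t) ≤ p i * ((i.choose 2 : ℝ) * t ^ 2) :=
        mul_le_mul_of_nonneg_left this (hnn i)
    _ = (i.choose 2 : ℝ) * p i * t ^ 2 := by ring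

include hnn hsum h3 in
lemma stmt6_le_R {t : ℝ} (h0 : 0 ≤ t) (ht : t ≤ 1) (h1 : Summable fun i : ℕ => (i : ℝ) * p i) :
    stmt6A p * t ^ 2 - stmt6B p * t ^ 3 ≤ stmt6R p t := by
  rw [stmt6A, stmt6B, ← tsum_mul_right, ← tsum_mul_right,
    ← Summable.tsum_sub (((stmt6_summable_c2 hnn hsum h3)).mul_right _)
      ((stmt6_summable_c3 hnn h3).mul_right _)]
  refine Summable.tsum_le_tsum (fun i => ?_)
    ((((stmt6_summable_c2 hnn hsum h3)).mul_right _).sub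
      ((stmt6_summable_c3 hnn h3).mul_right _))
    (stmt6_summable_R hnn hsum h3 h1 h0 ht)
  have hb := stmt6_le_one_sub_pow t h0 ht i
  have h : (i.choose 2 : ℝ) * t ^ 2 - (i.choose 3 : ℝ) * t ^ 3
      ≤ (1 - t) ^ i - 1 + i * t := by linarith
  calc (i.choose 2 : ℝ) * p i * t ^ 2 - (i.choose 3 : ℝ) * p i * t ^ 3
      = p i * ((i.choose 2 : ℝ) * t ^ 2 - (i.choose 3 : ℝ) * t ^ 3) := by ring
    _ ≤ p i * ((1 - t) ^ i - 1 + i * t) := mul_le_mul_of_nonneg_left h (hnn i)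

include hnn hsum h3 in
lemma stmt6_R_mono {t u : ℝ} (h0 : 0 ≤ t) (htu : t ≤ u) (hu : u ≤ 1)
    (h1 : Summable fun i : ℕ => (i : ℝ) * p i) :
    stmt6R p t ≤ stmt6R p u := by
  refine Summable.tsum_le_tsum (fun i => ?_)
    (stmt6_summable_R hnn hsum h3 h1 h0 (htu.trans hu))
    (stmt6_summable_R hnn hsum h3 h1 (h0.trans htu) hu)
  refine mul_le_mul_of_nonneg_left ?_ (hnn i)
  have key := stmt6_pow_sub_le (1 - t) (1 - u) (by linarith) (by linarith) (by linarith) i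
  linarith

include hnn hsum h3 h1 in
lemma stmt6_A_eq : 2 * stmt6A p = (∑' i : ℕ, (i : ℝ) ^ 2 * p i) - ∑' i : ℕ, (i : ℝ) * p i := by
  rw [stmt6A, ← tsum_mul_left]
  have e : ∀ i : ℕ, 2 * ((i.choose 2 : ℝ) * p i) = (i : ℝ) ^ 2 * p i - (i : ℝ) * p i := by
    intro i
    rw [Nat.cast_choose_two]
    ring
  rw [tsum_congr e, Summable.tsum_sub (stmt6_summable_sq hnn hsum h3) h1]

include hnn hsum h3 h1 in
lemma stmt6_var_eq (m : ℝ) (hm : ∑' i : ℕ, (i : ℝ) * p i = m) :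
    ∑' i : ℕ, ((i : ℝ) - m) ^ 2 * p i = (∑' i : ℕ, (i : ℝ) ^ 2 * p i) - m ^ 2 := by
  have e : ∀ i : ℕ, ((i : ℝ) - m) ^ 2 * p i
      = (i : ℝ) ^ 2 * p i - 2 * m * ((i : ℝ) * p i) + m ^ 2 * p i := by
    intro i; ring
  have h2 := stmt6_summable_sq hnn hsum h3
  have hS := stmt6_summable_p hnn hsum
  rw [tsum_congr e, Summable.tsum_add (h2.sub (h1.mul_left (2*m))) (hS.mul_left (m^2)),
    Summable.tsum_sub h2 (h1.mul_left (2*m)), tsum_mul_left, tsum_mul_left, hm, hsum]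
  ring

include hnn in
lemma stmt6_A_nonneg : 0 ≤ stmt6A p :=
  tsum_nonneg fun i => mul_nonneg (by positivity) (hnn i)

include hnn in
lemma stmt6_B_nonneg : 0 ≤ stmt6B p :=
  tsum_nonneg fun i => mul_nonneg (by positivity) (hnn i)

include hnn h3 in
lemma stmt6_6B_le : 6 * stmt6B p ≤ ∑' i : ℕ, (i : ℝ) ^ 3 * p i := by
  rw [stmt6B, ← tsum_mul_left]
  refine Summable.tsum_le_tsum (fun i => ?_) ((stmt6_summable_c3 hnn h3).mul_left 6) h3
  have hc : (i.choose 3 : ℝ) ≤ (i : ℝ) ^ 3 / 6 := by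
    have := Nat.choose_le_pow_div (α := ℝ) 3 i
    norm_num [Nat.factorial] at this
    push_cast at this ⊢
    linarith
  calc 6 * ((i.choose 3 : ℝ) * p i) ≤ 6 * ((i : ℝ) ^ 3 / 6 * p i) := by
        refine mul_le_mul_of_nonneg_left (mul_le_mul_of_nonneg_right hc (hnn i)) (by norm_num)
    _ = (i : ℝ) ^ 3 * p i := by ring

lemma stmt6_f0 : ∑' i : ℕ, p i * (0 : ℝ) ^ i = p 0 := by
  rw [tsum_eq_single 0 (fun i hi => by simp [zero_pow hi])]
  simp

include hnn hsum in
lemma stmt6_continuousOn (b : ℝ) (hb0 : 0 ≤ b) (hb1 : b ≤ 1) :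
    ContinuousOn (fun r : ℝ => ∑' i : ℕ, p i * r ^ i) (Set.Icc 0 b) := by
  rw [continuousOn_iff_continuous_restrict]
  have heq : (Set.Icc (0:ℝ) b).restrict (fun r : ℝ => ∑' i : ℕ, p i * r ^ i)
      = fun x : Set.Icc (0:ℝ) b => ∑' i : ℕ, p i * (x : ℝ) ^ i := rfl
  change Continuous (fun x : Set.Icc (0:ℝ) b => ∑' i : ℕ, p i * (x : ℝ) ^ i)
  refine continuous_tsum (u := fun i => p i * b ^ i) (fun i => ?_) ?_ (fun i x => ?_)
  · fun_prop
  · refine Summable.of_nonneg_of_le (fun i => mul_nonneg (hnn i) (by positivity))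
      (fun i => ?_) (stmt6_summable_p hnn hsum)
    have : b ^ i ≤ 1 := pow_le_one₀ hb0 hb1
    calc p i * b ^ i ≤ p i * 1 := mul_le_mul_of_nonneg_left this (hnn i)
      _ = p i := mul_one _
  · obtain ⟨x, hx⟩ := x
    simp only [Real.norm_eq_abs]
    rw [abs_mul, abs_of_nonneg (hnn i), abs_pow, abs_of_nonneg hx.1]
    exact mul_le_mul_of_nonneg_left (pow_le_pow_left₀ hx.1 hx.2 i) (hnn i)

include hnn hsum h3 h1 in
lemma stmt6_exists_root (hp0 : 0 < p 0) {m : ℝ} (hm : 1 < m)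
    (hmeq : ∑' i : ℕ, (i : ℝ) * p i = m) (hA : 0 < stmt6A p) :
    ∃ r : ℝ, 0 ≤ r ∧ r < 1 ∧ ∑' i : ℕ, p i * r ^ i = r := by
  set A := stmt6A p with hAdef
  set t₁ := min (1/2) ((m - 1) / (2 * A)) with ht₁def
  have ht₁pos : 0 < t₁ := lt_min (by norm_num) (div_pos (by linarith) (by linarith))
  have ht₁half : t₁ ≤ 1/2 := min_le_left _ _
  have ht₁le : t₁ ≤ 1 := by linarith
  set b := 1 - t₁ with hbdef
  have hb0 : (0:ℝ) ≤ b := by simp only [hbdef]; linarith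
  have hb1 : b < 1 := by simp only [hbdef]; linarith
  -- value at b
  have hfb : ∑' i : ℕ, p i * b ^ i < b := by
    have hid := stmt6_identity hnn hsum h3 h1 ht₁pos.le ht₁le
    have hR := stmt6_R_le hnn hsum h3 ht₁pos.le ht₁le h1
    have hAt : A * t₁ ≤ (m - 1) / 2 := by
      have h := min_le_right (1/2) ((m - 1) / (2 * A))
      have := mul_le_mul_of_nonneg_left (h.trans_eq rfl) hA.le
      calc A * t₁ ≤ A * ((m - 1) / (2 * A)) := mul_le_mul_of_nonneg_left (min_le_right _ _) hA.le
        _ = (m - 1) / 2 := by field_simp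
    have hAt2 : A * t₁ ^ 2 ≤ (m - 1) / 2 * t₁ := by
      calc A * t₁ ^ 2 = (A * t₁) * t₁ := by ring
        _ ≤ (m - 1) / 2 * t₁ := mul_le_mul_of_nonneg_right hAt ht₁pos.le
    have : ∑' i : ℕ, p i * b ^ i ≤ 1 - m * t₁ + (m - 1) / 2 * t₁ := by
      rw [hbdef, hid, hmeq]
      linarith
    have hfin : 1 - m * t₁ + (m - 1) / 2 * t₁ < b := by
      simp only [hbdef]
      nlinarith
    linarith
  -- IVT
  have hcont : ContinuousOn (fun r : ℝ => (∑' i : ℕ, p i * r ^ i) - r) (Set.Icc 0 b) :=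
    (stmt6_continuousOn hnn hsum b hb0 hb1.le).sub continuousOn_id
  have hmem : (0:ℝ) ∈ Set.Icc ((∑' i : ℕ, p i * b ^ i) - b) ((∑' i : ℕ, p i * (0:ℝ) ^ i) - 0) := by
    constructor
    · linarith
    · rw [stmt6_f0]; linarith
  have := intermediate_value_Icc' hb0 hcont hmem
  obtain ⟨r, hr, hr0⟩ := this
  have hfix : (∑' i : ℕ, p i * r ^ i) = r := by
    have h' : (∑' i : ℕ, p i * r ^ i) - r = 0 := hr0
    linarith
  exact ⟨r, hr.1, lt_of_le_of_lt hr.2 hb1, hfix⟩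

end dist


/-- For near-critical offspring laws with mean `1 + θ/n` (θ > 0),
variances `σₙ² → σ² > 0` and uniformly bounded third moments, the smallest
nonnegative fixed point `qₙ` of the generating function satisfies
`qₙ = 1 - 2θ/(nσ²) + o(1/n)`. -/
theorem stmt_6 (θ σ : ℝ) (hθ : 0 < θ) (hσ : 0 < σ)
    (p : ℕ → ℕ → ℝ) (s γ q : ℕ → ℝ)
    (hnonneg : ∀ n i, 0 ≤ p n i) (hp0 : ∀ n, 0 < p n 0)
    (hsum : ∀ n, ∑' i : ℕ, p n i = 1)
    (hmean : ∀ n : ℕ, 0 < n → ∑' i : ℕ, (i : ℝ) * p n i = 1 + θ / n)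
    (hvar : ∀ n : ℕ, 0 < n →
      ∑' i : ℕ, ((i : ℝ) - (1 + θ / n)) ^ 2 * p n i = (s n) ^ 2)
    (hspos : ∀ n, 0 < s n)
    (hthird : ∀ n, ∑' i : ℕ, (i : ℝ) ^ 3 * p n i = γ n)
    (hthirdsummable : ∀ n, Summable (fun i : ℕ => (i : ℝ) ^ 3 * p n i))
    (hγ : ∃ Γ : ℝ, ∀ n, γ n ≤ Γ)
    (hs : Tendsto s atTop (nhds σ))
    (hqfix : ∀ n, ∑' i : ℕ, p n i * q n ^ i = q n)
    (hq0 : ∀ n, 0 ≤ q n)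
    (hqmin : ∀ n : ℕ, ∀ r : ℝ, 0 ≤ r → (∑' i : ℕ, p n i * r ^ i) = r → q n ≤ r) :
    (fun n : ℕ => q n - (1 - 2 * θ / (n * σ ^ 2)))
      =o[atTop] fun n : ℕ => 1 / (n : ℝ) := by
  obtain ⟨Γ, hΓ⟩ := hγ
  have hΓ0 : (0:ℝ) ≤ Γ := by
    refine le_trans ?_ (hΓ 0)
    rw [← hthird 0]
    exact tsum_nonneg fun i => mul_nonneg (by positivity) (hnonneg 0 i)
  -- basic notations
  set t : ℕ → ℝ := fun n => 1 - q n with htdef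
  set A : ℕ → ℝ := fun n => stmt6A (p n) with hAdef
  set B : ℕ → ℝ := fun n => stmt6B (p n) with hBdef
  -- summability of first moments
  have h1sum : ∀ n : ℕ, 0 < n → Summable (fun i : ℕ => (i : ℝ) * p n i) := by
    intro n hn
    by_contra h
    have := hmean n hn
    rw [tsum_eq_zero_of_not_summable h] at this
    have hpos : 0 < θ / n := div_pos hθ (by exact_mod_cast hn)
    linarith
  -- q n ≤ 1 and t bounds
  have hq1 : ∀ n, q n ≤ 1 := by
    intro n
    refine hqmin n 1 zero_le_one ?_
    simpa using hsum n
  have ht0 : ∀ n, 0 ≤ t n := fun n => by simp only [htdef]; linarith [hq1 n]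
  have ht1 : ∀ n, t n ≤ 1 := fun n => by simp only [htdef]; linarith [hq0 n]
  -- A identities
  have hAeq : ∀ n : ℕ, 0 < n →
      2 * A n = s n ^ 2 + (1 + θ / n) ^ 2 - (1 + θ / n) := by
    intro n hn
    have hv := stmt6_var_eq (hnonneg n) (hsum n) (hthirdsummable n) (h1sum n hn)
      (1 + θ / n) (hmean n hn)
    rw [hvar n hn] at hv
    have hA2 := stmt6_A_eq (hnonneg n) (hsum n) (hthirdsummable n) (h1sum n hn)
    rw [hmean n hn] at hA2
    simp only [hAdef]
    linarith
  have hApos : ∀ n : ℕ, 0 < n → 0 < A n := by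
    intro n hn
    have h := hAeq n hn
    have hsn := hspos n
    have hmn : 0 < θ / n := div_pos hθ (by exact_mod_cast hn)
    nlinarith
  have hB0 : ∀ n, 0 ≤ B n := fun n => stmt6_B_nonneg (hnonneg n)
  have hB6 : ∀ n, 6 * B n ≤ Γ := by
    intro n
    have h := stmt6_6B_le (hnonneg n) (hthirdsummable n)
    rw [hthird n] at h
    exact h.trans (hΓ n)
  -- limit of A
  have hdiv0 : Tendsto (fun n : ℕ => θ / n) atTop (nhds 0) :=
    Tendsto.div_atTop tendsto_const_nhds tendsto_natCast_atTop_atTop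
  have hAlim : Tendsto A atTop (nhds (σ ^ 2 / 2)) := by
    have h1 : Tendsto (fun n : ℕ => s n ^ 2) atTop (nhds (σ ^ 2)) := hs.pow 2
    have h2 : Tendsto (fun n : ℕ => (1 + θ / n)) atTop (nhds 1) := by
      simpa using tendsto_const_nhds.add hdiv0
    have hform : Tendsto (fun n : ℕ => (s n ^ 2 + (1 + θ / n) ^ 2 - (1 + θ / n)) / 2)
        atTop (nhds (σ ^ 2 / 2)) := by
      have h3 := ((h1.add (h2.pow 2)).sub h2).div_const 2
      convert h3 using 2
      norm_num
    refine hform.congr' ?_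
    filter_upwards [eventually_gt_atTop 0] with n hn
    have := hAeq n hn
    linarith
  -- exact fixed point equation
  have hqt : ∀ n, q n = 1 - t n := fun n => by simp [htdef]
  have hEq : ∀ n : ℕ, 0 < n → (θ / n) * t n = stmt6R (p n) (t n) := by
    intro n hn
    have hfix := hqfix n
    rw [hqt n] at hfix
    rw [stmt6_identity (hnonneg n) (hsum n) (hthirdsummable n) (h1sum n hn)
      (ht0 n) (ht1 n), hmean n hn] at hfix
    linarith
  -- Step 1 : t n → 0
  have htlim : Tendsto t atTop (nhds 0) := by
    rw [Metric.tendsto_atTop]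
    intro ε hε
    set ε' := min ε (min 1 (3 * σ ^ 2 / (4 * (Γ + 1)))) with hε'def
    have hε'pos : 0 < ε' := by
      refine lt_min hε (lt_min one_pos ?_)
      positivity
    have hε'le : ε' ≤ ε := min_le_left _ _
    have hε'1 : ε' ≤ 1 := (min_le_right _ _).trans (min_le_left _ _)
    have hε'Γ : ε' ≤ 3 * σ ^ 2 / (4 * (Γ + 1)) := (min_le_right _ _).trans (min_le_right _ _)
    -- Bound: Γ/6 * ε' ≤ σ²/8
    have hkey : Γ / 6 * ε' ≤ σ ^ 2 / 8 := by
      have h1 : Γ / 6 * ε' ≤ Γ / 6 * (3 * σ ^ 2 / (4 * (Γ + 1))) := by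
        refine mul_le_mul_of_nonneg_left hε'Γ (by positivity)
      refine h1.trans ?_
      rw [div_mul_div_comm, div_le_div_iff₀ (by positivity) (by norm_num)]
      nlinarith [sq_nonneg σ]
    have hevA : ∀ᶠ n : ℕ in atTop, 3 * σ ^ 2 / 8 < A n :=
      hAlim.eventually (eventually_gt_nhds (by nlinarith [sq_nonneg σ, hσ]))
    have hevθ : ∀ᶠ n : ℕ in atTop, θ / n < σ ^ 2 * ε' ^ 2 / 4 := by
      refine hdiv0.eventually (eventually_lt_nhds ?_)
      positivity
    have hev := (hevA.and (hevθ.and (eventually_gt_atTop (0:ℕ)))).exists_forall_of_atTop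
    obtain ⟨N, hN⟩ := hev
    refine ⟨N, fun n hn => ?_⟩
    obtain ⟨hA38, hθn, hnpos⟩ := hN n hn
    have htn : t n < ε' := by
      by_contra hcon
      push_neg at hcon
      have hmono := stmt6_R_mono (hnonneg n) (hsum n) (hthirdsummable n)
        hε'pos.le hcon (ht1 n) (h1sum n hnpos)
      have hlow := stmt6_le_R (hnonneg n) (hsum n) (hthirdsummable n)
        hε'pos.le hε'1 (h1sum n hnpos)
      have hBe : B n * ε' ≤ σ ^ 2 / 8 := by
        have := hB6 n
        nlinarith [hε'pos.le]
      have hchain : σ ^ 2 * ε' ^ 2 / 4 ≤ (θ / n) * t n := by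
        rw [hEq n hnpos]
        refine le_trans ?_ hmono
        refine le_trans ?_ hlow
        have : A n * ε' ^ 2 - B n * ε' ^ 3 = ε' ^ 2 * (A n - B n * ε') := by ring
        nlinarith
      have hup : (θ / n) * t n < σ ^ 2 * ε' ^ 2 / 4 := by
        have hdp : (0:ℝ) < θ / n := div_pos hθ (by exact_mod_cast hnpos)
        nlinarith [mul_le_mul_of_nonneg_left (ht1 n) hdp.le]
      linarith
    rw [Real.dist_eq, sub_zero, abs_of_nonneg (ht0 n)]
    linarith
  -- Step 2 : t n > 0 for n ≥ 1
  have htpos : ∀ n : ℕ, 0 < n → 0 < t n := by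
    intro n hn
    have hmn : 1 < 1 + θ / n := by
      have : 0 < θ / n := div_pos hθ (by exact_mod_cast hn)
      linarith
    obtain ⟨r, hr0, hr1, hrfix⟩ := stmt6_exists_root (hnonneg n) (hsum n)
      (hthirdsummable n) (h1sum n hn) (hp0 n) hmn (hmean n hn) (hApos n hn)
    have := hqmin n r hr0 hrfix
    simp only [htdef]
    linarith
  -- Step 3 : two-sided bounds on n * t n
  have hlowB : ∀ n : ℕ, 0 < n → θ / A n ≤ (n : ℝ) * t n := by
    intro n hn
    have hup := stmt6_R_le (hnonneg n) (hsum n) (hthirdsummable n)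
      (ht0 n) (ht1 n) (h1sum n hn)
    have heq := hEq n hn
    have htp := htpos n hn
    have hnR : (0:ℝ) < n := by exact_mod_cast hn
    have h1 : θ / n ≤ A n * t n := by
      have h2 : (θ / n) * t n ≤ (A n * t n) * t n := by
        rw [heq]; nlinarith
      exact le_of_mul_le_mul_right h2 htp
    rw [div_le_iff₀ (hApos n hn)]
    rw [div_le_iff₀ hnR] at h1
    nlinarith
  have hupB : ∀ n : ℕ, 0 < n → 0 < A n - B n * t n →
      (n : ℝ) * t n ≤ θ / (A n - B n * t n) := by
    intro n hn hD
    have hlo := stmt6_le_R (hnonneg n) (hsum n) (hthirdsummable n)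
      (ht0 n) (ht1 n) (h1sum n hn)
    have heq := hEq n hn
    have htp := htpos n hn
    have hnR : (0:ℝ) < n := by exact_mod_cast hn
    have h1 : t n * (A n - B n * t n) ≤ θ / n := by
      have h2 : (t n * (A n - B n * t n)) * t n ≤ (θ / n) * t n := by
        rw [heq]; nlinarith
      exact le_of_mul_le_mul_right h2 htp
    rw [le_div_iff₀ hD]
    have h3 : (n:ℝ) * (t n * (A n - B n * t n)) ≤ (n:ℝ) * (θ / n) :=
      mul_le_mul_of_nonneg_left h1 hnR.le
    have h4 : (n:ℝ) * (θ / n) = θ := by field_simp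
    rw [h4] at h3
    calc (n:ℝ) * t n * (A n - B n * t n) = (n:ℝ) * (t n * (A n - B n * t n)) := by ring
      _ ≤ θ := h3
  -- Step 4 : limits
  have hBt : Tendsto (fun n : ℕ => B n * t n) atTop (nhds 0) := by
    have hub : Tendsto (fun n : ℕ => Γ / 6 * t n) atTop (nhds 0) := by
      simpa using htlim.const_mul (Γ / 6)
    refine tendsto_of_tendsto_of_tendsto_of_le_of_le tendsto_const_nhds hub
      (fun n => mul_nonneg (hB0 n) (ht0 n))
      (fun n => mul_le_mul_of_nonneg_right (by linarith [hB6 n]) (ht0 n))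
  have hDlim : Tendsto (fun n : ℕ => A n - B n * t n) atTop (nhds (σ ^ 2 / 2)) := by
    simpa using hAlim.sub hBt
  have hσ2 : σ ^ 2 / 2 ≠ 0 := by positivity
  have hval : θ / (σ ^ 2 / 2) = 2 * θ / σ ^ 2 := by
    field_simp
  have hL : Tendsto (fun n : ℕ => θ / A n) atTop (nhds (2 * θ / σ ^ 2)) := by
    rw [← hval]
    exact tendsto_const_nhds.div hAlim hσ2
  have hU : Tendsto (fun n : ℕ => θ / (A n - B n * t n)) atTop (nhds (2 * θ / σ ^ 2)) := by
    rw [← hval]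
    exact tendsto_const_nhds.div hDlim hσ2
  have hevD : ∀ᶠ n : ℕ in atTop, 0 < A n - B n * t n :=
    hDlim.eventually (eventually_gt_nhds (by positivity))
  have hnt : Tendsto (fun n : ℕ => (n : ℝ) * t n) atTop (nhds (2 * θ / σ ^ 2)) := by
    refine tendsto_of_tendsto_of_tendsto_of_le_of_le' hL hU ?_ ?_
    · filter_upwards [eventually_gt_atTop 0] with n hn
      exact hlowB n hn
    · filter_upwards [eventually_gt_atTop 0, hevD] with n hn hD
      exact hupB n hn hD
  -- conclusion
  refine (Asymptotics.isLittleO_iff_tendsto' ?_).mpr ?_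
  · filter_upwards [eventually_gt_atTop 0] with n hn h
    exfalso
    have hnne : (n:ℝ) ≠ 0 := by exact_mod_cast hn.ne'
    simp [hnne] at h
  · have hfin : Tendsto (fun n : ℕ => 2 * θ / σ ^ 2 - (n : ℝ) * t n) atTop (nhds 0) := by
      have := (tendsto_const_nhds (x := 2 * θ / σ ^ 2) (f := atTop (α := ℕ))).sub hnt
      simpa using this
    refine hfin.congr' ?_
    filter_upwards [eventually_gt_atTop 0] with n hn
    have hnne : (n:ℝ) ≠ 0 := by
      have : (0:ℝ) < n := by exact_mod_cast hn
      exact this.ne'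
    rw [hqt n]
    field_simp
    ring
end

section
/- Fix a > 0 and b > 0. There is at most one twice continuously differentiable function ψ̃ : (0,∞) → (0,∞) satisfying ψ̃'' = a ψ̃ + b ψ̃² on (0,∞), lim_{x→0⁺} ψ̃(x) = ∞, and lim_{x→∞} ψ̃(x) = 0. -/
open Real Set Filter

/-- Maximum principle helper: a C² function on (0,∞) whose second derivative is
positive wherever it is positive, tending to -∞ at 0⁺ and to 0 at ∞, is ≤ 0. -/
lemma helper_nonpos (f : ℝ → ℝ) (hf : ContDiffOn ℝ 2 f (Ioi 0))
    (hpos : ∀ x ∈ Ioi (0:ℝ), 0 < f x → 0 < deriv (deriv f) x)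
    (h0 : Tendsto f (nhdsWithin 0 (Ioi 0)) atBot)
    (hinf : Tendsto f atTop (nhds 0)) :
    ∀ x ∈ Ioi (0:ℝ), f x ≤ 0 := by
  by_contra hcon
  push_neg at hcon
  obtain ⟨x₀, hx₀, hfx₀⟩ := hcon
  set c := f x₀ with hc
  -- near 0, f < c
  have hev0 : ∀ᶠ x in nhdsWithin (0:ℝ) (Ioi 0), f x < c := h0.eventually (eventually_lt_atBot c)
  obtain ⟨A, hA, hAsub⟩ := mem_nhdsGT_iff_exists_Ioo_subset.1 hev0
  have hA0 : (0:ℝ) < A := hA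
  -- near ∞, f < c
  have hevinf : ∀ᶠ x in atTop, f x < c := hinf.eventually_lt_const hfx₀
  obtain ⟨B, hB⟩ := eventually_atTop.1 hevinf
  -- x₀ is in [A/2, max B x₀]
  have hAx₀ : A ≤ x₀ := by
    by_contra h
    push_neg at h
    exact absurd (hAsub ⟨hx₀, h⟩) (lt_irrefl c)
  set K : Set ℝ := Icc (A/2) (max B x₀) with hK
  have hx₀K : x₀ ∈ K := ⟨by linarith, le_max_right _ _⟩
  have hKsub : K ⊆ Ioi 0 := fun y hy => lt_of_lt_of_le (by linarith) hy.1
  have hfc : ContinuousOn f (Ioi 0) := hf.continuousOn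
  obtain ⟨z, hzK, hzmax⟩ := isCompact_Icc.exists_isMaxOn ⟨x₀, hx₀K⟩ (hfc.mono hKsub)
  have hz0 : z ∈ Ioi (0:ℝ) := hKsub hzK
  have hfz : c ≤ f z := hzmax hx₀K
  -- z is a global max on Ioi 0
  have hglob : ∀ y ∈ Ioi (0:ℝ), f y ≤ f z := by
    intro y hy
    rcases le_or_gt (A/2) y with h1 | h1
    · rcases le_or_gt y (max B x₀) with h2 | h2
      · exact hzmax ⟨h1, h2⟩
      · have : B ≤ y := le_of_lt (lt_of_le_of_lt (le_max_left _ _) h2)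
        exact le_trans (le_of_lt (hB y this)) hfz
    · have : y < A := by linarith
      exact le_trans (le_of_lt (hAsub ⟨hy, this⟩)) hfz
  -- second derivative facts
  have hf1 : ContDiffOn ℝ 1 (deriv f) (Ioi 0) := by
    have := hf.deriv_of_isOpen isOpen_Ioi (m := 1) (by norm_num)
    exact this
  have hf2cont : ContinuousOn (deriv (deriv f)) (Ioi 0) := by
    have := hf1.deriv_of_isOpen isOpen_Ioi (m := 0) (by norm_num)
    exact this.continuousOn
  have hnz : Ioi (0:ℝ) ∈ nhds z := isOpen_Ioi.mem_nhds hz0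
  have hf''z : 0 < deriv (deriv f) z := hpos z hz0 (lt_of_lt_of_le hfx₀ hfz)
  have hcontz : ContinuousAt (deriv (deriv f)) z := hf2cont.continuousAt hnz
  -- f'' > 0 on a ball around z inside Ioi 0
  have hev : ∀ᶠ x in nhds z, 0 < deriv (deriv f) x ∧ x ∈ Ioi (0:ℝ) :=
    (hcontz.eventually (eventually_gt_nhds hf''z)).and (eventually_of_mem hnz fun x hx => hx)
  obtain ⟨δ, hδ, hball⟩ := Metric.eventually_nhds_iff_ball.1 hev
  have hIoo : ∀ x ∈ Ioo (z - δ) (z + δ), 0 < deriv (deriv f) x ∧ x ∈ Ioi (0:ℝ) := by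
    intro x hx
    exact hball x (by rw [Real.ball_eq_Ioo]; exact hx)
  -- deriv f z = 0
  have hlocmax : IsLocalMax f z := eventually_of_mem hnz fun y hy => hglob y hy
  have hdz : deriv f z = 0 := hlocmax.deriv_eq_zero
  -- deriv f strictly monotone on Ioo (z-δ) (z+δ)
  have hmono : StrictMonoOn (deriv f) (Ioo (z - δ) (z + δ)) := by
    apply strictMonoOn_of_deriv_pos (convex_Ioo _ _)
    · exact hf1.continuousOn.mono fun x hx => (hIoo x hx).2
    · intro x hx
      rw [interior_Ioo] at hx
      exact (hIoo x hx).1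
  have hzmem : z ∈ Ioo (z - δ) (z + δ) := by constructor <;> linarith
  -- deriv f > 0 on (z, z+δ)
  have hdpos : ∀ x ∈ Ioo z (z + δ), 0 < deriv f x := by
    intro x hx
    have : deriv f z < deriv f x := hmono hzmem ⟨by linarith [hx.1], hx.2⟩ hx.1
    linarith [hdz ▸ this]
  -- f strictly monotone on [z, z + δ/2]
  have hfmono : StrictMonoOn f (Icc z (z + δ/2)) := by
    apply strictMonoOn_of_deriv_pos (convex_Icc _ _)
    · refine hfc.mono fun y hy => ?_
      exact lt_of_lt_of_le hz0 hy.1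
    · intro x hx
      rw [interior_Icc] at hx
      exact hdpos x ⟨hx.1, by linarith [hx.2]⟩
  have hlt : f z < f (z + δ/2) := hfmono ⟨le_refl _, by linarith⟩ ⟨by linarith, le_refl _⟩ (by linarith)
  have : f (z + δ/2) ≤ f z := hglob _ (by simp only [mem_Ioi]; linarith [mem_Ioi.1 hz0])
  linarith

lemma helper_le (a b : ℝ) (ha : 0 < a) (hb : 0 < b) (ψ₁ ψ₂ : ℝ → ℝ)
    (h1smooth : ContDiffOn ℝ 2 ψ₁ (Ioi 0))
    (h2smooth : ContDiffOn ℝ 2 ψ₂ (Ioi 0))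
    (h1pos : ∀ x ∈ Ioi (0:ℝ), 0 < ψ₁ x)
    (h2pos : ∀ x ∈ Ioi (0:ℝ), 0 < ψ₂ x)
    (h1ode : ∀ x ∈ Ioi (0:ℝ), deriv (deriv ψ₁) x = a * ψ₁ x + b * ψ₁ x ^ 2)
    (h2ode : ∀ x ∈ Ioi (0:ℝ), deriv (deriv ψ₂) x = a * ψ₂ x + b * ψ₂ x ^ 2)
    (h1zero : Tendsto ψ₁ (nhdsWithin 0 (Ioi 0)) atTop)
    (h1inf : Tendsto ψ₁ atTop (nhds 0))
    (h2inf : Tendsto ψ₂ atTop (nhds 0)) :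
    ∀ x ∈ Ioi (0:ℝ), ψ₂ x ≤ ψ₁ x := by
  -- Step 1: for every τ > 0 and x > 0, ψ₂ (x + τ) ≤ ψ₁ x
  have key : ∀ τ > (0:ℝ), ∀ x ∈ Ioi (0:ℝ), ψ₂ (x + τ) - ψ₁ x ≤ 0 := by
    intro τ hτ
    set g : ℝ → ℝ := fun x => ψ₂ (x + τ) - ψ₁ x with hg
    have hmaps : MapsTo (fun x : ℝ => x + τ) (Ioi 0) (Ioi 0) := fun x hx => by
      simp only [mem_Ioi] at *; linarith
    have hshift : ContDiffOn ℝ 2 (fun x : ℝ => ψ₂ (x + τ)) (Ioi 0) :=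
      h2smooth.comp ((contDiff_id.add contDiff_const).contDiffOn) hmaps
    have hgsmooth : ContDiffOn ℝ 2 g (Ioi 0) := hshift.sub h1smooth
    -- differentiability facts
    have hsd : DifferentiableOn ℝ (fun x : ℝ => ψ₂ (x + τ)) (Ioi 0) :=
      hshift.differentiableOn (by norm_num)
    have h1d : DifferentiableOn ℝ ψ₁ (Ioi 0) := h1smooth.differentiableOn (by norm_num)
    have hs1 : ContDiffOn ℝ 1 (deriv fun x : ℝ => ψ₂ (x + τ)) (Ioi 0) :=
      hshift.deriv_of_isOpen isOpen_Ioi (by norm_num)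
    have h11 : ContDiffOn ℝ 1 (deriv ψ₁) (Ioi 0) :=
      h1smooth.deriv_of_isOpen isOpen_Ioi (by norm_num)
    -- first derivative of g on Ioi 0
    have hderiv : ∀ x ∈ Ioi (0:ℝ), deriv g x
        = deriv (fun x : ℝ => ψ₂ (x + τ)) x - deriv ψ₁ x := by
      intro x hx
      have hn : Ioi (0:ℝ) ∈ nhds x := isOpen_Ioi.mem_nhds hx
      exact deriv_sub ((hsd x hx).differentiableAt hn) ((h1d x hx).differentiableAt hn)
    -- second derivative of g
    have hderiv2 : ∀ x ∈ Ioi (0:ℝ), deriv (deriv g) x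
        = deriv (deriv ψ₂) (x + τ) - deriv (deriv ψ₁) x := by
      intro x hx
      have hn : Ioi (0:ℝ) ∈ nhds x := isOpen_Ioi.mem_nhds hx
      have heq : deriv g =ᶠ[nhds x]
          fun y => deriv (fun x : ℝ => ψ₂ (x + τ)) y - deriv ψ₁ y :=
        eventually_of_mem hn fun y hy => hderiv y hy
      rw [heq.deriv_eq, deriv_fun_sub
        (((hs1.differentiableOn (by norm_num)) x hx).differentiableAt hn)
        (((h11.differentiableOn (by norm_num)) x hx).differentiableAt hn)]
      congr 1
      have hfun : (deriv fun x : ℝ => ψ₂ (x + τ)) = fun y => deriv ψ₂ (y + τ) :=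
        funext fun y => deriv_comp_add_const ψ₂ τ y
      rw [hfun, deriv_comp_add_const]
    -- apply max principle
    have := helper_nonpos g hgsmooth ?_ ?_ ?_
    · exact this
    · intro x hx hgx
      rw [hderiv2 x hx, h1ode x hx, h2ode (x + τ) (hmaps hx)]
      have hp1 : 0 < ψ₁ x := h1pos x hx
      have hp2 : ψ₁ x < ψ₂ (x + τ) := by
        have h' : (0:ℝ) < ψ₂ (x + τ) - ψ₁ x := hgx
        linarith
      have hsq : ψ₁ x ^ 2 < ψ₂ (x + τ) ^ 2 := by nlinarith
      have hgx' : g x = ψ₂ (x + τ) - ψ₁ x := rfl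
      nlinarith
    · -- tendsto atBot at 0⁺
      have hcont2 : ContinuousAt ψ₂ τ :=
        (h2smooth.continuousOn.continuousAt (isOpen_Ioi.mem_nhds hτ))
      have hshift0 : Tendsto (fun x : ℝ => x + τ) (nhdsWithin 0 (Ioi 0)) (nhds τ) := by
        have : Tendsto (fun x : ℝ => x + τ) (nhds 0) (nhds (0 + τ)) :=
          (continuous_id.add continuous_const).tendsto 0
        rw [zero_add] at this
        exact this.mono_left nhdsWithin_le_nhds
      have h2t : Tendsto (fun x : ℝ => ψ₂ (x + τ)) (nhdsWithin 0 (Ioi 0)) (nhds (ψ₂ τ)) :=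
        hcont2.tendsto.comp hshift0
      have hneg : Tendsto (fun x => -ψ₁ x) (nhdsWithin 0 (Ioi 0)) atBot :=
        tendsto_neg_atTop_atBot.comp h1zero
      have hle : ∀ᶠ x in nhdsWithin (0:ℝ) (Ioi 0), ψ₂ (x + τ) ≤ ψ₂ τ + 1 :=
        h2t.eventually (eventually_le_nhds (lt_add_one _))
      have := tendsto_atBot_add_left_of_ge' _ (ψ₂ τ + 1) hle hneg
      simpa [hg, sub_eq_add_neg] using this
    · -- tendsto 0 at ∞
      have h2t : Tendsto (fun x : ℝ => ψ₂ (x + τ)) atTop (nhds 0) :=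
        h2inf.comp (tendsto_atTop_add_const_right _ τ (tendsto_id))
      have := h2t.sub h1inf
      rw [sub_zero] at this
      exact this
  -- Step 2: let τ → 0⁺
  intro x hx
  have hcont : ContinuousAt ψ₂ x :=
    h2smooth.continuousOn.continuousAt (isOpen_Ioi.mem_nhds hx)
  have ht : Tendsto (fun τ : ℝ => ψ₂ (x + τ)) (nhdsWithin 0 (Ioi 0)) (nhds (ψ₂ x)) := by
    have h0 : Tendsto (fun τ : ℝ => x + τ) (nhds 0) (nhds (x + 0)) :=
      (continuous_const.add continuous_id).tendsto 0
    rw [add_zero] at h0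
    exact hcont.tendsto.comp (h0.mono_left nhdsWithin_le_nhds)
  have hev : ∀ᶠ τ in nhdsWithin (0:ℝ) (Ioi 0), ψ₂ (x + τ) ≤ ψ₁ x :=
    eventually_mem_nhdsWithin.mono fun τ hτ => by linarith [key τ hτ x hx]
  exact le_of_tendsto ht hev

/-- For `a, b > 0`, there is at most one positive C² function on
`(0,∞)` satisfying `ψ̃'' = a ψ̃ + b ψ̃²` with `ψ̃ → ∞` at `0⁺` and `ψ̃ → 0` at `∞`. -/
theorem stmt_8 (a b : ℝ) (ha : 0 < a) (hb : 0 < b) (ψ₁ ψ₂ : ℝ → ℝ)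
    (h1smooth : ContDiffOn ℝ 2 ψ₁ (Ioi 0))
    (h2smooth : ContDiffOn ℝ 2 ψ₂ (Ioi 0))
    (h1pos : ∀ x ∈ Ioi (0:ℝ), 0 < ψ₁ x)
    (h2pos : ∀ x ∈ Ioi (0:ℝ), 0 < ψ₂ x)
    (h1ode : ∀ x ∈ Ioi (0:ℝ), deriv (deriv ψ₁) x = a * ψ₁ x + b * ψ₁ x ^ 2)
    (h2ode : ∀ x ∈ Ioi (0:ℝ), deriv (deriv ψ₂) x = a * ψ₂ x + b * ψ₂ x ^ 2)
    (h1zero : Tendsto ψ₁ (nhdsWithin 0 (Ioi 0)) atTop)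
    (h2zero : Tendsto ψ₂ (nhdsWithin 0 (Ioi 0)) atTop)
    (h1inf : Tendsto ψ₁ atTop (nhds 0))
    (h2inf : Tendsto ψ₂ atTop (nhds 0)) :
    EqOn ψ₁ ψ₂ (Ioi 0) := by
  intro x hx
  have h21 := helper_le a b ha hb ψ₁ ψ₂ h1smooth h2smooth h1pos h2pos h1ode h2ode h1zero h1inf h2inf x hx
  have h12 := helper_le a b ha hb ψ₂ ψ₁ h2smooth h1smooth h2pos h1pos h2ode h1ode h2zero h2inf h1inf x hx
  exact le_antisymm h12 h21
end

section
/- Let {a_z}_{z∈ℤ} be a finitely supported probability distribution on ℤ with mean 0 and variance σ_R² > 0, let θ > 0, and define m(γ) = (1+θ/n)Σ_z a_z e^{-γz}. If |β| < √(2θ/σ_R²), then for all sufficiently large n, m(β/√n) · exp(-(β/√n) · m'(β/√n)/m(β/√n)) > 1. -/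
open Real Set Filter
set_option maxHeartbeats 1000000

lemma philim (F F1 F2 : ℝ → ℝ) (σ2 : ℝ)
    (hFd : ∀ γ, HasDerivAt F (F1 γ) γ) (hF1d : ∀ γ, HasDerivAt F1 (F2 γ) γ)
    (hFpos : ∀ γ, 0 < F γ) (hF0 : F 0 = 1) (hF10 : F1 0 = 0) (hF20 : F2 0 = σ2)
    (hF2c : ContinuousAt F2 0) :
    Tendsto (fun γ => (Real.log (F γ) - γ * (F1 γ / F γ)) / γ ^ 2)
      (nhdsWithin (0:ℝ) {0}ᶜ) (nhds (-σ2 / 2)) := by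
  set φ : ℝ → ℝ := fun γ => Real.log (F γ) - γ * (F1 γ / F γ) with hφdef
  set Q : ℝ → ℝ := fun γ => (F2 γ * F γ - F1 γ * F1 γ) / F γ ^ 2 with hQdef
  have hφ' : ∀ γ, HasDerivAt φ (-(γ * Q γ)) γ := by
    intro γ
    have h1 : HasDerivAt (fun γ => Real.log (F γ)) (F1 γ / F γ) γ :=
      (hFd γ).log (hFpos γ).ne'
    have h2 : HasDerivAt (fun γ => F1 γ / F γ) (Q γ) γ :=
      (hF1d γ).div (hFd γ) (hFpos γ).ne'
    have h3 := (hasDerivAt_id γ).mul h2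
    have h4 := h1.sub h3
    have : -(γ * Q γ) = F1 γ / F γ - (1 * (F1 γ / F γ) + γ * Q γ) := by ring
    rw [this]
    exact h4
  have hφ0 : φ 0 = 0 := by simp [hφdef, hF0]
  have hφt : Tendsto φ (nhdsWithin (0:ℝ) {0}ᶜ) (nhds 0) := by
    have := (hφ' 0).continuousAt.tendsto
    rw [hφ0] at this
    exact this.mono_left nhdsWithin_le_nhds
  have hgd : ∀ γ : ℝ, HasDerivAt (fun x : ℝ => x ^ 2) (2 * γ) γ := by
    intro γ; simpa using hasDerivAt_pow 2 γ
  have hgt : Tendsto (fun γ : ℝ => γ ^ 2) (nhdsWithin (0:ℝ) {0}ᶜ) (nhds 0) := by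
    have : Tendsto (fun γ : ℝ => γ ^ 2) (nhds 0) (nhds ((0:ℝ) ^ 2)) :=
      (continuous_pow 2).continuousAt
    simpa using this.mono_left nhdsWithin_le_nhds
  have hQc : ContinuousAt Q 0 := by
    have cF : ContinuousAt F 0 := (hFd 0).continuousAt
    have cF1 : ContinuousAt F1 0 := (hF1d 0).continuousAt
    exact ((hF2c.mul cF).sub (cF1.mul cF1)).div (cF.pow 2) (by simp [hF0])
  have hQ0 : Q 0 = σ2 := by simp [hQdef, hF0, hF10, hF20]
  have hdiv : Tendsto (fun γ => -(γ * Q γ) / (2 * γ)) (nhdsWithin (0:ℝ) {0}ᶜ)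
      (nhds (-σ2 / 2)) := by
    have h1 : Tendsto (fun γ => -Q γ / 2) (nhdsWithin (0:ℝ) {0}ᶜ) (nhds (-σ2 / 2)) := by
      have := (hQc.neg.div_const 2).tendsto
      simp only [Pi.neg_apply, hQ0] at this
      exact this.mono_left nhdsWithin_le_nhds
    refine h1.congr' ?_
    filter_upwards [self_mem_nhdsWithin] with γ (hγ : γ ≠ 0)
    field_simp
  exact HasDerivAt.lhopital_zero_nhdsNE
    (Filter.Eventually.of_forall fun x => hφ' x)
    (Filter.Eventually.of_forall fun x => hgd x)
    (by filter_upwards [self_mem_nhdsWithin] with γ (hγ : γ ≠ 0);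
        exact mul_ne_zero two_ne_zero hγ)
    hφt hgt hdiv

/-- Biggins condition. For a finitely supported mean-zero step
distribution with variance `σ_R² > 0`, `θ > 0`, and
`m(γ) = (1+θ/n) Σ_z a_z e^{-γ z}`: if `|β| < √(2θ/σ_R²)`, then for all
sufficiently large `n`, `m(β/√n) exp(-(β/√n) m'(β/√n)/m(β/√n)) > 1`. -/
theorem stmt_12 (a : ℤ → ℝ) (σR θ β : ℝ) (hσ : 0 < σR) (hθ : 0 < θ)
    (hnonneg : ∀ z, 0 ≤ a z) (hfin : (Function.support a).Finite)
    (hsum : ∑' z : ℤ, a z = 1)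
    (hmean : ∑' z : ℤ, (z : ℝ) * a z = 0)
    (hvar : ∑' z : ℤ, (z : ℝ) ^ 2 * a z = σR ^ 2)
    (hβ : |β| < Real.sqrt (2 * θ / σR ^ 2)) :
    ∀ᶠ n : ℕ in atTop,
      let m : ℝ → ℝ := fun γ => (1 + θ / n) * ∑' z : ℤ, a z * Real.exp (-γ * z)
      1 < m (β / Real.sqrt n) *
        Real.exp (-(β / Real.sqrt n) *
          (deriv m (β / Real.sqrt n) / m (β / Real.sqrt n))) := by
  classical
  set s : Finset ℤ := hfin.toFinset with hsdef
  have hmem : ∀ z : ℤ, z ∉ s → a z = 0 := fun z hz => by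
    by_contra h; exact hz (hfin.mem_toFinset.mpr h)
  set F : ℝ → ℝ := fun γ => ∑ z ∈ s, a z * Real.exp (-γ * z) with hFdef
  set F1 : ℝ → ℝ := fun γ => ∑ z ∈ s, a z * (Real.exp (-γ * z) * -(z:ℝ)) with hF1def
  set F2 : ℝ → ℝ := fun γ =>
    ∑ z ∈ s, a z * (Real.exp (-γ * z) * -(z:ℝ) * -(z:ℝ)) with hF2def
  have htsum : ∀ γ : ℝ, ∑' z : ℤ, a z * Real.exp (-γ * z) = F γ := fun γ =>
    tsum_eq_sum (fun z hz => by rw [hmem z hz, zero_mul])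
  have hasum : ∑' z : ℤ, a z = ∑ z ∈ s, a z := tsum_eq_sum hmem
  have hF0 : F 0 = 1 := by
    have : F 0 = ∑ z ∈ s, a z := by
      rw [hFdef]; apply Finset.sum_congr rfl; intro z _; simp
    rw [this, ← hasum, hsum]
  have hF10 : F1 0 = 0 := by
    have h : ∑' z : ℤ, (z:ℝ) * a z = ∑ z ∈ s, (z:ℝ) * a z :=
      tsum_eq_sum (fun z hz => by rw [hmem z hz, mul_zero])
    have h2 : F1 0 = ∑ z ∈ s, -((z:ℝ) * a z) := by
      rw [hF1def]; apply Finset.sum_congr rfl; intro z _; simp; ring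
    rw [h2, Finset.sum_neg_distrib, ← h, hmean, neg_zero]
  have hF20 : F2 0 = σR ^ 2 := by
    have h : ∑' z : ℤ, (z:ℝ) ^ 2 * a z = ∑ z ∈ s, (z:ℝ) ^ 2 * a z :=
      tsum_eq_sum (fun z hz => by rw [hmem z hz, mul_zero])
    have h2 : F2 0 = ∑ z ∈ s, (z:ℝ) ^ 2 * a z := by
      rw [hF2def]; apply Finset.sum_congr rfl; intro z _; simp; ring
    rw [h2, ← h, hvar]
  have hFpos : ∀ γ : ℝ, 0 < F γ := by
    have hex : ∃ z ∈ s, 0 < a z := by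
      by_contra h
      push_neg at h
      have hz : ∑ z ∈ s, a z = 0 :=
        Finset.sum_eq_zero fun z hz => le_antisymm (h z hz) (hnonneg z)
      exact one_ne_zero (by rw [← hsum, hasum, hz])
    intro γ
    obtain ⟨z0, hz0s, hz0⟩ := hex
    exact Finset.sum_pos' (fun z _ => mul_nonneg (hnonneg z) (Real.exp_pos _).le)
      ⟨z0, hz0s, mul_pos hz0 (Real.exp_pos _)⟩
  have hexp : ∀ (z : ℤ) (γ : ℝ),
      HasDerivAt (fun x : ℝ => Real.exp (-x * z)) (Real.exp (-γ * z) * -(z:ℝ)) γ := by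
    intro z γ
    have h1 : HasDerivAt (fun x : ℝ => -x * (z:ℝ)) (-(z:ℝ)) γ := by
      simpa using (hasDerivAt_id γ).neg.mul_const (z:ℝ)
    exact h1.exp
  have hFd : ∀ γ, HasDerivAt F (F1 γ) γ := fun γ =>
    HasDerivAt.fun_sum fun z _ => (hexp z γ).const_mul (a z)
  have hF1d : ∀ γ, HasDerivAt F1 (F2 γ) γ := fun γ =>
    HasDerivAt.fun_sum fun z _ => ((hexp z γ).mul_const (-(z:ℝ))).const_mul (a z)
  have hF2c : ContinuousAt F2 0 := by
    have : Continuous F2 := by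
      rw [hF2def]
      exact continuous_finset_sum _ fun z _ => by fun_prop
    exact this.continuousAt
  have hlim := philim F F1 F2 (σR ^ 2) hFd hF1d hFpos hF0 hF10 hF20 hF2c
  -- limit of n * log (1 + θ/n)
  have hA : Tendsto (fun n : ℕ => (n:ℝ) * Real.log (1 + θ / n)) atTop (nhds θ) := by
    have h1 := Real.tendsto_one_add_div_pow_exp θ
    have h2 := (Real.continuousAt_log (Real.exp_pos θ).ne').tendsto.comp h1
    simp only [Function.comp_def, Real.log_pow, Real.log_exp] at h2
    exact h2
  set φ : ℝ → ℝ := fun γ => Real.log (F γ) - γ * (F1 γ / F γ) with hφdef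
  have hB : Tendsto (fun n : ℕ => (n:ℝ) * φ (β / Real.sqrt n)) atTop
      (nhds (-(β ^ 2 * σR ^ 2 / 2))) := by
    rcases eq_or_ne β 0 with hb | hb
    · have : (fun n : ℕ => (n:ℝ) * φ (β / Real.sqrt n)) = fun _ => 0 := by
        funext n; simp [hb, hφdef, hF0]
      rw [this, hb]
      simpa using tendsto_const_nhds
    · have hsq : Tendsto (fun n : ℕ => Real.sqrt n) atTop atTop := by
        rw [tendsto_atTop]
        intro b
        filter_upwards [eventually_ge_atTop ⌈b ^ 2⌉₊] with k hk
        apply Real.le_sqrt_of_sq_le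
        calc b ^ 2 ≤ (⌈b ^ 2⌉₊ : ℝ) := Nat.le_ceil _
          _ ≤ (k : ℝ) := by exact_mod_cast hk
      have hγ0 : Tendsto (fun n : ℕ => β / Real.sqrt n) atTop (nhds 0) := by
        have := hsq.inv_tendsto_atTop.const_mul β
        simpa [div_eq_mul_inv] using this
      have hγ : Tendsto (fun n : ℕ => β / Real.sqrt n) atTop (nhdsWithin (0:ℝ) {0}ᶜ) := by
        rw [tendsto_nhdsWithin_iff]
        refine ⟨hγ0, ?_⟩
        filter_upwards [eventually_ge_atTop 1] with n hn
        have hn0 : (0:ℝ) < n := by exact_mod_cast Nat.lt_of_lt_of_le Nat.zero_lt_one hn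
        have hsqp : 0 < Real.sqrt n := Real.sqrt_pos.mpr hn0
        exact div_ne_zero hb hsqp.ne'
      have hcomp := (hlim.comp hγ).const_mul (β ^ 2)
      have hval : β ^ 2 * (-(σR ^ 2) / 2) = -(β ^ 2 * σR ^ 2 / 2) := by ring
      rw [hval] at hcomp
      refine hcomp.congr' ?_
      filter_upwards [eventually_ge_atTop 1] with n hn
      have hn0 : (0:ℝ) < n := by exact_mod_cast Nat.lt_of_lt_of_le Nat.zero_lt_one hn
      have hsqn : (Real.sqrt n) ^ 2 = (n:ℝ) := Real.sq_sqrt hn0.le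
      have hγ2 : (β / Real.sqrt n) ^ 2 = β ^ 2 / n := by rw [div_pow, hsqn]
      simp only [Function.comp_def, hφdef]
      rw [hγ2]
      field_simp
  have hL : 0 < θ + -(β ^ 2 * σR ^ 2 / 2) := by
    have h1 : β ^ 2 < 2 * θ / σR ^ 2 := by
      simpa [sq_abs] using (Real.lt_sqrt (abs_nonneg β)).mp hβ
    have hσ2 : 0 < σR ^ 2 := pow_pos hσ 2
    rw [lt_div_iff₀ hσ2] at h1
    nlinarith
  have hpos := (hA.add hB).eventually (eventually_gt_nhds hL)
  filter_upwards [hpos, eventually_ge_atTop 1] with n hn hn1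
  have hnn : (0:ℝ) < n := by exact_mod_cast Nat.lt_of_lt_of_le Nat.zero_lt_one hn1
  have hc : 0 < 1 + θ / (n:ℝ) := by positivity
  show 1 < ((1 + θ / (n:ℝ)) * ∑' z : ℤ, a z * Real.exp (-(β / Real.sqrt n) * z)) *
    Real.exp (-(β / Real.sqrt n) *
      (deriv (fun γ => (1 + θ / (n:ℝ)) * ∑' z : ℤ, a z * Real.exp (-γ * z))
          (β / Real.sqrt n) /
        ((1 + θ / (n:ℝ)) * ∑' z : ℤ, a z * Real.exp (-(β / Real.sqrt n) * z))))
  set γ0 : ℝ := β / Real.sqrt n with hγ0def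
  have hmeq : (fun γ : ℝ => (1 + θ / (n:ℝ)) * ∑' z : ℤ, a z * Real.exp (-γ * z)) =
      fun γ => (1 + θ / (n:ℝ)) * F γ := funext fun γ => by rw [htsum]
  rw [htsum, hmeq]
  have hder : deriv (fun γ => (1 + θ / (n:ℝ)) * F γ) γ0 = (1 + θ / (n:ℝ)) * F1 γ0 :=
    ((hFd γ0).const_mul _).deriv
  rw [hder, mul_div_mul_left _ _ (ne_of_gt hc)]
  have hkey : 0 < Real.log (1 + θ / (n:ℝ)) + φ γ0 := by
    have h2 : 0 < (n:ℝ) * (Real.log (1 + θ / (n:ℝ)) + φ γ0) := by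
      rw [mul_add]; exact hn
    rcases mul_pos_iff.mp h2 with ⟨_, h⟩ | ⟨h, _⟩
    · exact h
    · linarith
  calc (1:ℝ) = Real.exp 0 := Real.exp_zero.symm
    _ < Real.exp (Real.log (1 + θ / (n:ℝ)) + φ γ0) := Real.exp_lt_exp.mpr hkey
    _ = (1 + θ / (n:ℝ)) * F γ0 * Real.exp (-γ0 * (F1 γ0 / F γ0)) := by
        rw [hφdef]
        simp only [sub_eq_add_neg]
        rw [Real.exp_add, Real.exp_add, Real.exp_log hc, Real.exp_log (hFpos γ0), neg_mul]
        ring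
end

section
/- Let ψ̃₁, ψ̃₂ : (0,∞) → (0,∞) be C² functions with ψ̃ᵢ'' = aψ̃ᵢ + bψ̃ᵢ² (a, b > 0), lim_{x→∞}ψ̃ᵢ(x) = 0 and lim_{x→0⁺}ψ̃₂(x) = ∞. Suppose ψ̃₁(x₀) < ψ̃₂(x₀) for some x₀ > 0. Then for c > 1 sufficiently close to 1, the function f(x) = ψ̃₁(x) - ψ̃₂(cx + c - 1) attains a strictly negative minimum at some interior point x* ∈ (0,∞), and at that point f''(x*) = aψ̃₁(x*) - ac²ψ̃₂(cx*+c-1) + bψ̃₁²(x*) - bc²ψ̃₂²(cx*+c-1) < 0, contradicting f''(x*) ≥ 0; hence no such x₀ exists when ψ̃₁ also satisfies lim_{x→0⁺}ψ̃₁(x) = ∞, proving ψ̃₁ ≥ ψ̃₂ cannot fail, i.e., ψ̃₁ = ψ̃₂. -/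
open Real Set Filter

/-- Second derivative test: at a local minimum the second derivative is nonneg. -/
lemma my_second_deriv_nonneg (f : ℝ → ℝ) (x L : ℝ) (hmin : IsLocalMin f x)
    (hf : ∀ᶠ y in nhds x, DifferentiableAt ℝ f y)
    (hL : HasDerivAt (deriv f) L x) : 0 ≤ L := by
  by_contra hneg
  push_neg at hneg
  have hd0 : deriv f x = 0 := hmin.deriv_eq_zero
  have hslope := hasDerivAt_iff_tendsto_slope.1 hL
  have hev : ∀ᶠ y in nhdsWithin x {x}ᶜ, slope (deriv f) x y < 0 :=
    hslope.eventually (eventually_lt_nhds hneg)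
  have hev' : ∀ᶠ y in nhdsWithin x (Ioi x), deriv f y < 0 := by
    have h1 : ∀ᶠ y in nhdsWithin x (Ioi x), slope (deriv f) x y < 0 :=
      nhdsWithin_mono x (fun y (hy : y ∈ Ioi x) => (ne_of_gt hy : y ≠ x)) hev
    filter_upwards [h1, self_mem_nhdsWithin] with y hy hy'
    have hxy : 0 < y - x := sub_pos.2 hy'
    rw [slope_def_field, div_neg_iff] at hy
    rcases hy with ⟨h, h'⟩ | ⟨h, h'⟩
    · linarith
    · linarith
  have hminev : ∀ᶠ y in nhdsWithin x (Ioi x), f x ≤ f y := nhdsWithin_le_nhds hmin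
  obtain ⟨δ₀, hδ₀pos, hδ₀⟩ := Metric.eventually_nhds_iff.1 hf
  obtain ⟨u, hu, hsub⟩ := mem_nhdsGT_iff_exists_Ioo_subset.1 (hev'.and hminev)
  set δ : ℝ := min (u - x) δ₀ with hδ
  have hδpos : 0 < δ := lt_min (sub_pos.2 hu) hδ₀pos
  set y := x + δ / 2 with hy
  have hyx : x < y := by simp only [hy]; linarith
  have hyu : y < u := by
    have h1 : δ ≤ u - x := min_le_left _ _
    simp only [hy]; linarith
  have hcont : ContinuousOn f (Icc x y) := by
    intro z hz
    rcases hz with ⟨h1, h2⟩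
    have hδ2 : δ / 2 < δ₀ := lt_of_lt_of_le (by linarith) (min_le_right _ _)
    have hdist : dist z x < δ₀ := by
      rw [Real.dist_eq, abs_lt]
      constructor
      · linarith
      · simp only [hy] at h2; linarith
    exact ((hδ₀ hdist).continuousAt).continuousWithinAt
  have hderivneg : ∀ z ∈ interior (Icc x y), deriv f z < 0 := by
    intro z hz
    rw [interior_Icc] at hz
    exact (hsub ⟨hz.1, lt_trans hz.2 hyu⟩).1
  have hanti : StrictAntiOn f (Icc x y) :=
    strictAntiOn_of_deriv_neg (convex_Icc x y) hcont hderivneg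
  have hlt : f y < f x := hanti ⟨le_refl x, le_of_lt hyx⟩ ⟨le_of_lt hyx, le_refl y⟩ hyx
  have hle : f x ≤ f y := (hsub ⟨hyx, hyu⟩).2
  linarith

/-- Key comparison lemma. -/
lemma my_key (a b : ℝ) (ha : 0 < a) (hb : 0 < b) (ψ₁ ψ₂ : ℝ → ℝ)
    (h1smooth : ContDiffOn ℝ 2 ψ₁ (Ioi 0))
    (h2smooth : ContDiffOn ℝ 2 ψ₂ (Ioi 0))
    (h1pos : ∀ x ∈ Ioi (0:ℝ), 0 < ψ₁ x)
    (h2pos : ∀ x ∈ Ioi (0:ℝ), 0 < ψ₂ x)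
    (h1ode : ∀ x ∈ Ioi (0:ℝ), deriv (deriv ψ₁) x = a * ψ₁ x + b * ψ₁ x ^ 2)
    (h2ode : ∀ x ∈ Ioi (0:ℝ), deriv (deriv ψ₂) x = a * ψ₂ x + b * ψ₂ x ^ 2)
    (h1inf : Tendsto ψ₁ atTop (nhds 0))
    (h2inf : Tendsto ψ₂ atTop (nhds 0))
    (h1zero : Tendsto ψ₁ (nhdsWithin 0 (Ioi 0)) atTop) :
    ∀ x ∈ Ioi (0:ℝ), ψ₂ x ≤ ψ₁ x := by
  by_contra hcon
  push_neg at hcon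
  obtain ⟨x₀, hx₀, hlt⟩ := hcon
  have hx₀pos : (0:ℝ) < x₀ := hx₀
  -- differentiability bookkeeping
  have hD1 : ∀ x ∈ Ioi (0:ℝ), DifferentiableAt ℝ ψ₁ x := fun x hx =>
    (h1smooth.differentiableOn two_ne_zero).differentiableAt (isOpen_Ioi.mem_nhds hx)
  have hD2 : ∀ x ∈ Ioi (0:ℝ), DifferentiableAt ℝ ψ₂ x := fun x hx =>
    (h2smooth.differentiableOn two_ne_zero).differentiableAt (isOpen_Ioi.mem_nhds hx)
  have h1d : ContDiffOn ℝ 1 (deriv ψ₁) (Ioi 0) :=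
    h1smooth.deriv_of_isOpen isOpen_Ioi (by norm_num)
  have h2d : ContDiffOn ℝ 1 (deriv ψ₂) (Ioi 0) :=
    h2smooth.deriv_of_isOpen isOpen_Ioi (by norm_num)
  have hD1' : ∀ x ∈ Ioi (0:ℝ), DifferentiableAt ℝ (deriv ψ₁) x := fun x hx =>
    (h1d.differentiableOn one_ne_zero).differentiableAt (isOpen_Ioi.mem_nhds hx)
  have hD2' : ∀ x ∈ Ioi (0:ℝ), DifferentiableAt ℝ (deriv ψ₂) x := fun x hx =>
    (h2d.differentiableOn one_ne_zero).differentiableAt (isOpen_Ioi.mem_nhds hx)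
  -- choose c > 1 with ψ₁ x₀ < ψ₂ (c * x₀ + c - 1)
  have hψ₂cont : ContinuousAt ψ₂ x₀ := (hD2 x₀ hx₀).continuousAt
  have hacont : ContinuousAt (fun c : ℝ => c * x₀ + c - 1) 1 := by fun_prop
  have hFcont : ContinuousAt (fun c : ℝ => ψ₂ (c * x₀ + c - 1)) 1 := by
    refine ContinuousAt.comp ?_ hacont
    rw [show (1:ℝ) * x₀ + 1 - 1 = x₀ by ring]
    exact hψ₂cont
  have hF1 : ψ₁ x₀ < (fun c : ℝ => ψ₂ (c * x₀ + c - 1)) 1 := by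
    simpa [show (1:ℝ) * x₀ + 1 - 1 = x₀ by ring] using hlt
  have hevc : ∀ᶠ c in nhds (1:ℝ), ψ₁ x₀ < ψ₂ (c * x₀ + c - 1) :=
    hFcont.eventually (eventually_gt_nhds hF1)
  have hevc' : ∀ᶠ c in nhdsWithin (1:ℝ) (Ioi 1),
      ψ₁ x₀ < ψ₂ (c * x₀ + c - 1) ∧ c ∈ Ioi 1 :=
    (hevc.filter_mono nhdsWithin_le_nhds).and self_mem_nhdsWithin
  obtain ⟨c, hcψ, hc1⟩ := hevc'.exists
  have hc1 : (1:ℝ) < c := hc1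
  have hcpos : (0:ℝ) < c := by linarith
  -- the shifted function
  set σ : ℝ → ℝ := fun x => c * x + (c - 1) with hσdef
  have hσpos : ∀ x ∈ Ioi (0:ℝ), 0 < σ x := by
    intro x hx
    have : (0:ℝ) < x := hx
    simp only [hσdef]
    nlinarith
  have hσd : ∀ x : ℝ, HasDerivAt σ c x := by
    intro x
    exact (by simpa using (hasDerivAt_id x).const_mul c : HasDerivAt (fun y => c * y) c x).add_const (c - 1)
  set g : ℝ → ℝ := fun x => ψ₂ (σ x) with hgdef
  set f : ℝ → ℝ := fun x => ψ₁ x - g x with hfdef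
  have hgd : ∀ x ∈ Ioi (0:ℝ), HasDerivAt g (deriv ψ₂ (σ x) * c) x := fun x hx =>
    ((hD2 (σ x) (hσpos x hx)).hasDerivAt).comp x (hσd x)
  have hGd : ∀ x ∈ Ioi (0:ℝ),
      HasDerivAt (fun y => deriv ψ₂ (σ y) * c) (deriv (deriv ψ₂) (σ x) * c * c) x := by
    intro x hx
    exact (((hD2' (σ x) (hσpos x hx)).hasDerivAt).comp x (hσd x)).mul_const c
  have hfd : ∀ x ∈ Ioi (0:ℝ), HasDerivAt f (deriv ψ₁ x - deriv ψ₂ (σ x) * c) x := by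
    intro x hx
    exact ((hD1 x hx).hasDerivAt).sub (hgd x hx)
  -- second derivative of f at any point of Ioi 0
  have hf2 : ∀ x ∈ Ioi (0:ℝ),
      HasDerivAt (deriv f)
        (deriv (deriv ψ₁) x - deriv (deriv ψ₂) (σ x) * c * c) x := by
    intro x hx
    have hH : HasDerivAt (fun y => deriv ψ₁ y - deriv ψ₂ (σ y) * c)
        (deriv (deriv ψ₁) x - deriv (deriv ψ₂) (σ x) * c * c) x :=
      ((hD1' x hx).hasDerivAt).sub (hGd x hx)
    have heq : (fun y => deriv ψ₁ y - deriv ψ₂ (σ y) * c) =ᶠ[nhds x] deriv f := by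
      filter_upwards [isOpen_Ioi.mem_nhds hx] with y hy
      exact ((hfd y hy).deriv).symm
    exact hH.congr_of_eventuallyEq heq.symm
  -- boundary behavior
  have hσ0 : Tendsto σ (nhdsWithin 0 (Ioi 0)) (nhds (c - 1)) := by
    have : Tendsto σ (nhds 0) (nhds (σ 0)) := (by fun_prop : Continuous σ).tendsto 0
    simp only [hσdef, mul_zero, zero_add] at this
    exact this.mono_left nhdsWithin_le_nhds
  have hc1pos : (0:ℝ) < c - 1 := by linarith
  have hg0 : Tendsto g (nhdsWithin 0 (Ioi 0)) (nhds (ψ₂ (c - 1))) :=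
    ((hD2 (c - 1) hc1pos).continuousAt).tendsto.comp hσ0
  have hf0 : Tendsto f (nhdsWithin 0 (Ioi 0)) atTop := by
    apply tendsto_atTop_mono' _ _
      (tendsto_atTop_add_const_right _ (-(ψ₂ (c - 1) + 1)) h1zero)
    filter_upwards [hg0.eventually (eventually_lt_nhds (lt_add_one (ψ₂ (c - 1))))] with x hx
    simp only [hfdef]
    linarith
  have hσtop : Tendsto σ atTop atTop := by
    apply tendsto_atTop_add_const_right
    exact Tendsto.const_mul_atTop hcpos tendsto_id
  have hgtop : Tendsto g atTop (nhds 0) := h2inf.comp hσtop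
  have hftop : Tendsto f atTop (nhds 0) := by
    have := h1inf.sub hgtop
    simpa using this
  -- negative value at x₀
  have hfx₀ : f x₀ < 0 := by
    show ψ₁ x₀ - ψ₂ (c * x₀ + (c - 1)) < 0
    rw [show c * x₀ + (c - 1) = c * x₀ + c - 1 by ring]
    linarith
  -- eventually bounds
  obtain ⟨u, hu, husub⟩ := mem_nhdsGT_iff_exists_Ioo_subset.1
    (hf0.eventually (eventually_gt_atTop (f x₀)))
  obtain ⟨β, hβ⟩ := (hftop.eventually (eventually_gt_nhds hfx₀)).exists_forall_of_atTop
  set l : ℝ := min (u / 2) x₀ with hldef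
  set r : ℝ := max β x₀ with hrdef
  have hupos : (0:ℝ) < u := hu
  have hlpos : 0 < l := lt_min (by linarith) hx₀pos
  have hlr : l ≤ r := le_trans (min_le_right _ _) (le_max_right _ _)
  have hIccsub : Icc l r ⊆ Ioi 0 := fun z hz => lt_of_lt_of_le hlpos hz.1
  have hfc : ContinuousOn f (Icc l r) := fun z hz =>
    ((hfd z (hIccsub hz)).differentiableAt.continuousAt).continuousWithinAt
  obtain ⟨x', hx'mem, hx'min⟩ :=
    isCompact_Icc.exists_isMinOn (nonempty_Icc.2 hlr) hfc
  have hx'pos : (0:ℝ) < x' := hIccsub hx'mem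
  have hx₀mem : x₀ ∈ Icc l r := ⟨min_le_right _ _, le_max_right _ _⟩
  have hx'neg : f x' < 0 := lt_of_le_of_lt (hx'min hx₀mem) hfx₀
  -- global minimality
  have hglob : ∀ x ∈ Ioi (0:ℝ), f x' ≤ f x := by
    intro x hx
    by_cases hcase : x ∈ Icc l r
    · exact hx'min hcase
    · rcases not_and_or.1 hcase with h | h
      · push_neg at h
        have hxu : x < u := by
          have : l ≤ u / 2 := min_le_left _ _
          linarith
        exact le_of_lt (lt_of_le_of_lt (hx'min hx₀mem) (husub ⟨hx, hxu⟩))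
      · push_neg at h
        have hxβ : β ≤ x := by
          have : β ≤ r := le_max_left _ _
          linarith
        exact le_of_lt (lt_of_le_of_lt (hx'min hx₀mem) (hβ x hxβ))
  have hlocal : IsLocalMin f x' := by
    filter_upwards [isOpen_Ioi.mem_nhds hx'pos] with y hy
    exact hglob y hy
  -- apply the second derivative test
  have hdiffev : ∀ᶠ y in nhds x', DifferentiableAt ℝ f y := by
    filter_upwards [isOpen_Ioi.mem_nhds hx'pos] with y hy
    exact (hfd y hy).differentiableAt
  have hL := my_second_deriv_nonneg f x' _ hlocal hdiffev (hf2 x' hx'pos)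
  -- derive contradiction
  have hσx' : σ x' ∈ Ioi (0:ℝ) := hσpos x' hx'pos
  rw [h1ode x' hx'pos, h2ode (σ x') hσx'] at hL
  set p := ψ₁ x' with hpdef
  set q := ψ₂ (σ x') with hqdef
  have hppos : 0 < p := h1pos x' hx'pos
  have hqpos : 0 < q := h2pos (σ x') hσx'
  have hpq : p < q := by
    have h : p - q < 0 := hx'neg
    linarith
  have h1 : a * p < a * q := mul_lt_mul_of_pos_left hpq ha
  have hsq : p ^ 2 < q ^ 2 := by
    have := mul_lt_mul_of_pos_left hpq hppos
    have := mul_lt_mul_of_pos_left hpq hqpos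
    nlinarith [this]
  have h2 : b * p ^ 2 < b * q ^ 2 := mul_lt_mul_of_pos_left hsq hb
  have hbase : 0 < a * q + b * q ^ 2 := by positivity
  have hcc : 1 < c * c :=
    lt_of_lt_of_le hc1 (le_mul_of_one_le_right hcpos.le hc1.le)
  have h3 : a * q + b * q ^ 2 < (a * q + b * q ^ 2) * (c * c) :=
    (lt_mul_iff_one_lt_right hbase).2 hcc
  linarith

/-- Comparison/uniqueness argument for `ψ'' = aψ + bψ²`
(`a, b > 0`). If `ψ̃₁, ψ̃₂` are positive C² solutions on `(0,∞)` tending to 0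
at `∞`, with `ψ̃₂ → ∞` at `0⁺`, then no point `x₀` with
`ψ̃₁(x₀) < ψ̃₂(x₀)` can exist once `ψ̃₁` also tends to `∞` at `0⁺` (the rescaled
comparison function would attain a strictly negative interior minimum where
`f'' < 0`, a contradiction); hence `ψ̃₁ = ψ̃₂` on `(0,∞)`. -/
theorem stmt_19 (a b : ℝ) (ha : 0 < a) (hb : 0 < b) (ψ₁ ψ₂ : ℝ → ℝ)
    (h1smooth : ContDiffOn ℝ 2 ψ₁ (Ioi 0))
    (h2smooth : ContDiffOn ℝ 2 ψ₂ (Ioi 0))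
    (h1pos : ∀ x ∈ Ioi (0:ℝ), 0 < ψ₁ x)
    (h2pos : ∀ x ∈ Ioi (0:ℝ), 0 < ψ₂ x)
    (h1ode : ∀ x ∈ Ioi (0:ℝ), deriv (deriv ψ₁) x = a * ψ₁ x + b * ψ₁ x ^ 2)
    (h2ode : ∀ x ∈ Ioi (0:ℝ), deriv (deriv ψ₂) x = a * ψ₂ x + b * ψ₂ x ^ 2)
    (h1inf : Tendsto ψ₁ atTop (nhds 0))
    (h2inf : Tendsto ψ₂ atTop (nhds 0))
    (h1zero : Tendsto ψ₁ (nhdsWithin 0 (Ioi 0)) atTop)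
    (h2zero : Tendsto ψ₂ (nhdsWithin 0 (Ioi 0)) atTop) :
    (¬ ∃ x₀ ∈ Ioi (0:ℝ), ψ₁ x₀ < ψ₂ x₀) ∧ EqOn ψ₁ ψ₂ (Ioi 0) := by
  have key12 := my_key a b ha hb ψ₁ ψ₂ h1smooth h2smooth h1pos h2pos h1ode h2ode
    h1inf h2inf h1zero
  have key21 := my_key a b ha hb ψ₂ ψ₁ h2smooth h1smooth h2pos h1pos h2ode h1ode
    h2inf h1inf h2zero
  constructor
  · rintro ⟨x₀, hx₀, hlt⟩
    exact absurd (key12 x₀ hx₀) (not_le.2 hlt)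
  · intro x hx
    exact le_antisymm (key21 x hx) (key12 x hx)
end
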